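/- Let φ : Δ^{0̂} → Δ be a group epimorphism and let g be a conjugate in Δ^{0̂} of one of R₁, R₂, R₁^{R₀}, R₂^{R₀}. Then gφ is either the identity or a conjugate in Δ of R₀, R₁ or R₂; moreover g ∈ Δ⁺ φ⁻¹ if and only if g ∈ ker φ. -/

import Mathlib

/-- The relations making each generator an involution. -/
def rels : Set (FreeGroup (Fin 3)) := {x | ∃ i, x = (FreeGroup.of i) ^ 2}

/-- Δ = C₂ * C₂ * C₂. -/
abbrev Δ := PresentedGroup rels

/-- The generators R₀, R₁, R₂ of Δ. -/
def R (i : Fin 3) : Δ := PresentedGroup.of i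

/-- Δ^{0̂}, the normal closure of {R₁, R₂}, an index-2 subgroup of Δ. -/
def Δ0 : Subgroup Δ := Subgroup.normalClosure {R 1, R 2}

/-- Δ⁺, the even-word subgroup of Δ. -/
def Δplus : Subgroup Δ := Subgroup.closure {R 1 * R 2, R 2 * R 0, R 0 * R 1}

/-- The preimage H φ⁻¹, regarded as a subgroup of Δ. -/
def preim (φ : Δ0 →* Δ) (H : Subgroup Δ) : Subgroup Δ :=
  (H.comap φ).map Δ0.subtype

/-- The kernel of φ, regarded as a subgroup of Δ. -/
def kerS (φ : Δ0 →* Δ) : Subgroup Δ := φ.ker.map Δ0.subtype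

/-- The conjugate K^g = g⁻¹ K g. -/
def conjS (K : Subgroup Δ) (g : Δ) : Subgroup Δ :=
  K.map (MulAut.conj g⁻¹).toMonoidHom

/-- The four involutions R₁, R₂, R₁^{R₀}, R₂^{R₀} generating Δ^{0̂}. -/
def gens : Set Δ := {R 1, R 2, (R 0)⁻¹ * R 1 * R 0, (R 0)⁻¹ * R 2 * R 0}

lemma R_sq (i : Fin 3) : R i * R i = 1 := by
  have : ((FreeGroup.of i) ^ 2 : FreeGroup (Fin 3)) ∈ Subgroup.normalClosure rels :=
    Subgroup.subset_normalClosure ⟨i, rfl⟩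
  have h : (PresentedGroup.mk rels) ((FreeGroup.of i) ^ 2) = 1 :=
    (QuotientGroup.eq_one_iff _).2 this
  simpa [pow_two, R, PresentedGroup.of, map_mul] using h

lemma R_inv (i : Fin 3) : (R i)⁻¹ = R i := by
  rw [inv_eq_iff_mul_eq_one, R_sq]

/-- Reduced words. -/
def Red : Type := {l : List (Fin 3) // l.Chain' (· ≠ ·)}

def stepFun (i : Fin 3) (l : Red) : Red :=
  if h : l.1.head? = some i then
    ⟨l.1.tail, l.2.tail⟩
  else
    ⟨i :: l.1, List.isChain_cons.2 ⟨fun y hy hiy => h (by rw [hy, hiy]), l.2⟩⟩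

lemma stepFun_val (i : Fin 3) (l : Red) :
    (stepFun i l).1 = if l.1.head? = some i then l.1.tail else i :: l.1 := by
  unfold stepFun; split <;> simp_all

lemma stepFun_invol (i : Fin 3) : Function.Involutive (stepFun i) := by
  intro l
  apply Subtype.ext
  rcases l with ⟨l, hl⟩
  by_cases h : l.head? = some i
  · rcases l with _ | ⟨a, t⟩
    · simp at h
    · simp only [List.head?_cons, Option.some.injEq] at h
      subst h
      have ht : t.head? ≠ some a := fun hc => (List.isChain_cons.1 hl).1 a hc rfl
      erw [stepFun_val, stepFun_val]
      simp [ht]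
  · erw [stepFun_val, stepFun_val]
    simp [h]

def stepPerm (i : Fin 3) : Equiv.Perm Red := (stepFun_invol i).toPerm

lemma rels_perm : ∀ r ∈ rels, FreeGroup.lift stepPerm r = 1 := by
  rintro r ⟨i, rfl⟩
  rw [map_pow, FreeGroup.lift_apply_of]
  ext l
  simp [pow_two, Equiv.Perm.mul_apply, stepPerm, stepFun_invol i l]

def act : Δ →* Equiv.Perm Red := PresentedGroup.toGroup rels_perm

lemma act_R (i : Fin 3) : act (R i) = stepPerm i := PresentedGroup.toGroup.of rels_perm

def prodW (l : List (Fin 3)) : Δ := (l.map R).prod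

lemma prodW_nil : prodW [] = 1 := rfl
lemma prodW_cons (a : Fin 3) (l : List (Fin 3)) : prodW (a :: l) = R a * prodW l := by
  simp [prodW]

lemma act_prodW (l : List (Fin 3)) (hl : l.Chain' (· ≠ ·)) :
    act (prodW l) ⟨[], List.isChain_nil⟩ = ⟨l, hl⟩ := by
  induction l with
  | nil => simp [prodW_nil]; rfl
  | cons a t ih =>
    have ht : t.Chain' (· ≠ ·) := (List.isChain_cons.1 hl).2
    erw [prodW_cons, map_mul, Equiv.Perm.mul_apply, ih ht, act_R]
    have hh : t.head? ≠ some a := by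
      intro hc
      exact (List.isChain_cons.1 hl).1 a hc rfl
    show stepFun a ⟨t, ht⟩ = ⟨a :: t, hl⟩
    unfold stepFun
    erw [dif_neg hh]

lemma prodW_inj {l m : List (Fin 3)} (hl : l.Chain' (· ≠ ·)) (hm : m.Chain' (· ≠ ·))
    (h : prodW l = prodW m) : l = m := by
  have := act_prodW l hl
  rw [h, act_prodW m hm] at this
  exact congrArg Subtype.val this.symm

lemma prodW_ne_one {l : List (Fin 3)} (hl : l.Chain' (· ≠ ·)) (hne : l ≠ []) :
    prodW l ≠ 1 := fun h => hne (prodW_inj hl List.isChain_nil (by rw [h, prodW_nil]))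

lemma step_mul (i : Fin 3) (l : List (Fin 3)) (hl : l.Chain' (· ≠ ·)) :
    R i * prodW l = prodW (stepFun i ⟨l, hl⟩).1 := by
  erw [stepFun_val]
  by_cases h : l.head? = some i
  · rw [if_pos h]
    rcases l with _ | ⟨a, t⟩
    · simp at h
    · simp only [List.head?_cons, Option.some.injEq] at h
      subst h
      rw [prodW_cons, ← mul_assoc, R_sq]
      simp
  · rw [if_neg h, prodW_cons]

lemma exists_red (x : Δ) : ∃ l : List (Fin 3), l.Chain' (· ≠ ·) ∧ x = prodW l := by
  have hmem : x ∈ Submonoid.closure (Set.range R) := by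
    have hK : ∀ y ∈ Submonoid.closure (Set.range R), y⁻¹ ∈ Submonoid.closure (Set.range R) := by
      intro y hy
      induction hy using Submonoid.closure_induction with
      | mem z hz => rcases hz with ⟨i, rfl⟩; rw [R_inv]; exact Submonoid.subset_closure ⟨i, rfl⟩
      | one => simpa using Submonoid.one_mem _
      | mul a b _ _ ha hb => rw [mul_inv_rev]; exact Submonoid.mul_mem _ hb ha
    let K : Subgroup Δ := { Submonoid.closure (Set.range R) with inv_mem' := fun h => hK _ h }
    have : Subgroup.closure (Set.range R) ≤ K :=
      Subgroup.closure_le K |>.2 (fun y hy => Submonoid.subset_closure hy)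
    have htop : (⊤ : Subgroup Δ) ≤ K := by
      rw [← PresentedGroup.closure_range_of rels]
      exact this
    exact htop (Subgroup.mem_top x)
  obtain ⟨L, hL, rfl⟩ := Submonoid.exists_list_of_mem_closure hmem
  clear hmem
  induction L with
  | nil => exact ⟨[], List.isChain_nil, rfl⟩
  | cons a t ih =>
    obtain ⟨l, hl, hp⟩ := ih (fun y hy => hL y (List.mem_cons_of_mem a hy))
    obtain ⟨i, rfl⟩ := hL a (List.mem_cons_self)
    refine ⟨(stepFun i ⟨l, hl⟩).1, (stepFun i ⟨l, hl⟩).2, ?_⟩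
    rw [List.prod_cons, hp, step_mul i l hl]

lemma prodW_append (x y : List (Fin 3)) : prodW (x ++ y) = prodW x * prodW y := by
  simp [prodW]

lemma R_cancel (i : Fin 3) (x : Δ) : R i * (R i * x) = x := by
  rw [← mul_assoc, R_sq, one_mul]

lemma main_aux : ∀ n (l : List (Fin 3)), l.length ≤ n → l.Chain' (· ≠ ·) →
    prodW l * prodW l = 1 → prodW l = 1 ∨ ∃ i c, prodW l = c⁻¹ * R i * c := by
  intro n
  induction n with
  | zero =>
    intro l hlen _ _
    left
    have : l = [] := List.length_eq_zero_iff.1 (Nat.le_zero.1 hlen)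
    rw [this, prodW_nil]
  | succ n ih =>
    intro l hlen hl hsq
    rcases l with _ | ⟨a, t⟩
    · left; rfl
    rcases t.eq_nil_or_concat with rfl | ⟨m, b, rfl⟩
    · right
      exact ⟨a, 1, by simp [prodW]⟩
    simp only [List.concat_eq_append] at hl hsq hlen ⊢
    by_cases hab : a = b
    · subst hab
      have hm : m.Chain' (· ≠ ·) := ((List.isChain_cons.1 hl).2).left_of_append
      have decomp : prodW (a :: (m ++ [a])) = R a * (prodW m * R a) := by
        rw [prodW_cons, prodW_append]
        simp [prodW]
      rw [decomp] at hsq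
      have husq : prodW m * prodW m = 1 := by
        have h2 : R a * (prodW m * prodW m * R a) = 1 := by
          rw [← hsq]; simp [mul_assoc, R_cancel]
        have h3 : prodW m * prodW m * R a = R a := by
          have := congrArg (fun x => R a * x) h2
          simpa [R_cancel] using this
        have h4 := congrArg (fun x => x * R a) h3
        simpa [mul_assoc, R_sq] using h4
      have hmlen : m.length ≤ n := by
        simp only [List.length_cons, List.length_append, List.length_singleton] at hlen
        omega
      rcases ih m hmlen hm husq with h1 | ⟨i, c, hc⟩
      · left
        rw [decomp, h1, one_mul, R_sq]
      · right
        refine ⟨i, c * R a, ?_⟩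
        rw [decomp, hc, mul_inv_rev, R_inv]
        simp [mul_assoc]
    · exfalso
      set l := a :: (m ++ [b]) with hldef
      have hlast : l.getLast? = some b := by
        rw [hldef, show a :: (m ++ [b]) = (a :: m) ++ [b] by simp]
        exact List.getLast?_concat
      have hll : (l ++ l).Chain' (· ≠ ·) := by
        refine List.IsChain.append hl hl ?_
        intro x hx y hy
        rw [hlast] at hx
        simp only [Option.mem_def, Option.some.injEq] at hx
        simp only [hldef, List.head?_cons, Option.mem_def, Option.some.injEq] at hy
        subst hx; subst hy
        exact fun h => hab h.symm
      have : prodW (l ++ l) = 1 := by rw [prodW_append, hsq]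
      have hnil : l ++ l = [] := prodW_inj hll List.isChain_nil (by rw [this, prodW_nil])
      simp [hldef] at hnil

lemma order_two (x : Δ) (hx : x * x = 1) : x = 1 ∨ ∃ i c, x = c⁻¹ * R i * c := by
  obtain ⟨l, hl, rfl⟩ := exists_red x
  exact main_aux l.length l le_rfl hl hx

def sgn : Δ →* ℤˣ := PresentedGroup.toGroup (f := fun _ => (-1 : ℤˣ))
  (by rintro r ⟨i, rfl⟩; rw [map_pow, FreeGroup.lift_apply_of]; decide)

lemma sgn_R (i : Fin 3) : sgn (R i) = -1 := PresentedGroup.toGroup.of _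

lemma gens_sq {s : Δ} (hs : s ∈ gens) : s * s = 1 := by
  rcases hs with rfl | rfl | rfl | rfl
  · exact R_sq 1
  · exact R_sq 2
  · simp [mul_assoc, R_cancel, R_sq]
  · simp [mul_assoc, R_cancel, R_sq]

lemma Δplus_le_ker_sgn : Δplus ≤ sgn.ker := by
  rw [Δplus, Subgroup.closure_le]
  rintro x (rfl | rfl | rfl) <;> simp [MonoidHom.mem_ker, sgn_R]

theorem stmt10 (φ : Δ0 →* Δ) (hφ : Function.Surjective φ)
    (g : Δ0) (hg : ∃ s ∈ gens, ∃ c ∈ Δ0, (g : Δ) = c⁻¹ * s * c) :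
    (φ g = 1 ∨ ∃ i : Fin 3, ∃ c : Δ, φ g = c⁻¹ * R i * c) ∧
    ((g : Δ) ∈ preim φ Δplus ↔ g ∈ φ.ker) := by
  obtain ⟨s, hs, c, _, hgc⟩ := hg
  have hgsq : g * g = 1 := by
    apply Subtype.ext
    push_cast
    rw [hgc]
    calc c⁻¹ * s * c * (c⁻¹ * s * c) = c⁻¹ * (s * s) * c := by group
    _ = 1 := by rw [gens_sq hs]; group
  have hφsq : φ g * φ g = 1 := by rw [← map_mul, hgsq, map_one]
  have part1 := order_two (φ g) hφsq
  refine ⟨part1, ?_⟩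
  constructor
  · intro h
    obtain ⟨x, hx, hxg⟩ := h
    have hxg' : x = g := Subtype.ext hxg
    subst hxg'
    rcases part1 with h1 | ⟨i, d, hd⟩
    · exact h1
    · exfalso
      have h1 : sgn (φ x) = 1 := Δplus_le_ker_sgn hx
      rw [hd, map_mul, map_mul, map_inv, sgn_R] at h1
      have : sgn d⁻¹ * -1 * sgn d = -1 := by
        rw [map_inv]
        rcases Int.units_eq_one_or (sgn d) with h | h <;> rw [h] <;> decide
      rw [map_inv] at this
      rw [this] at h1
      exact absurd h1 (by decide)
  · intro h
    refine ⟨g, ?_, rfl⟩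
    rw [SetLike.mem_coe, Subgroup.mem_comap, MonoidHom.mem_ker.1 h]
    exact one_mem _
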